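/- Let R be a noncommutative domain and a K-algebra, and let S = R ⊗_K R^{opp} be its enveloping algebra, assumed to be a domain. Let r ∈ R be a proper two-sided element (i.e., r ≠ 0, Rr = rR, and Rr ⊊ R). Then for natural numbers m ≤ n with m ≥ 1, the two-sided ideals ⟨r^n⟩ and ⟨r^{m+n}⟩ of R are distinct; consequently the R-modules R²/R²·Diag(r^m, r^n) and R²/R²·Diag(1, r^{m+n}) are not isomorphic. -/
import Mathlib



/-- Let `R` be a noncommutative domain and `K`-algebra whose enveloping algebra
`S = R ⊗_K Rᵒᵖ` is a domain, and let `r ∈ R` be a proper two-sided element (`r ≠ 0`,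
`Rr = rR`, `Rr ⊊ R`). Then for `1 ≤ m ≤ n` the two-sided ideals `⟨rⁿ⟩ = Rrⁿ` and
`⟨r^{m+n}⟩ = Rr^{m+n}` are distinct, and the left modules `R²/R²·Diag(r^m, r^n)` and
`R²/R²·Diag(1, r^{m+n})` (cokernels, i.e. quotients by the span of the rows) are not
isomorphic. -/
theorem diag_powers_not_isomorphic
    {K R : Type*} [Field K] [Ring R] [IsDomain R] [Algebra K R]
    [IsDomain (TensorProduct K R Rᵐᵒᵖ)]
    (r : R) (hr0 : r ≠ 0)
    (htwosided : Set.range (fun a : R => a * r) = Set.range (fun a : R => r * a))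
    (hproper : Set.range (fun a : R => a * r) ≠ Set.univ)
    (m n : ℕ) (hm : 1 ≤ m) (hmn : m ≤ n) :
    Set.range (fun a : R => a * r ^ n) ≠ Set.range (fun a : R => a * r ^ (m + n)) ∧
    IsEmpty
      (((Fin 2 → R) ⧸ Submodule.span R
          (Set.range fun i => Matrix.diagonal ![r ^ m, r ^ n] i))
        ≃ₗ[R]
       ((Fin 2 → R) ⧸ Submodule.span R
          (Set.range fun i => Matrix.diagonal ![(1 : R), r ^ (m + n)] i))) := by
  -- r commutes past elements (two-sidedness)
  have hcomm : ∀ x : R, ∃ y : R, y * r = r * x := by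
    intro x
    have : r * x ∈ Set.range (fun a : R => a * r) := by
      rw [htwosided]; exact ⟨x, rfl⟩
    exact this
  have hcommpow : ∀ (k : ℕ) (x : R), ∃ y : R, r ^ k * x = y * r ^ k := by
    intro k
    induction k with
    | zero => exact fun x => ⟨x, by simp⟩
    | succ k ih =>
      intro x
      obtain ⟨y, hy⟩ := ih x
      obtain ⟨z, hz⟩ := hcomm y
      refine ⟨z, ?_⟩
      calc r ^ (k+1) * x = r * (r ^ k * x) := by rw [pow_succ', mul_assoc]
        _ = (r * y) * r ^ k := by rw [hy, mul_assoc]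
        _ = (z * r) * r ^ k := by rw [hz]
        _ = z * r ^ (k+1) := by rw [mul_assoc, ← pow_succ']
  -- a right inverse of a power of r contradicts properness
  have hkey : ∀ k : ℕ, 1 ≤ k → ∀ b : R, b * r ^ k = 1 → False := by
    intro k hk b hb
    apply hproper
    ext a
    simp only [Set.mem_univ, iff_true, Set.mem_range]
    have h1 : b * r ^ (k - 1) * r = 1 := by
      rw [mul_assoc, ← pow_succ, Nat.sub_add_cancel hk, hb]
    exact ⟨a * (b * r ^ (k - 1)), by rw [mul_assoc, h1, mul_one]⟩
  have hcancel : ∀ a : R, a * r ^ (m + n) = r ^ n → False := by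
    intro a ha
    have hrn : r ^ n ≠ 0 := pow_ne_zero _ hr0
    have : a * r ^ m = 1 := by
      apply mul_right_cancel₀ hrn
      rw [one_mul, mul_assoc, ← pow_add]; exact ha
    exact hkey m hm a this
  have h1 : Set.range (fun a : R => a * r ^ n) ≠ Set.range (fun a : R => a * r ^ (m + n)) := by
    intro heq
    have : r ^ n ∈ Set.range (fun a : R => a * r ^ (m + n)) := by
      rw [← heq]; exact ⟨1, one_mul _⟩
    obtain ⟨a, ha⟩ := this
    exact hcancel a ha
  refine ⟨h1, ⟨fun e => ?_⟩⟩
  set N1 := Submodule.span R (Set.range fun i => Matrix.diagonal ![r ^ m, r ^ n] i) with hN1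
  set N2 := Submodule.span R (Set.range fun i => Matrix.diagonal ![(1 : R), r ^ (m + n)] i) with hN2
  -- membership criterion for N1
  have rowmem : ∀ w : Fin 2 → R, (∃ c, c * r ^ m = w 0) → (∃ c, c * r ^ n = w 1) → w ∈ N1 := by
    rintro w ⟨c0, h0⟩ ⟨c1, h1⟩
    have hw : w = c0 • Matrix.diagonal ![r ^ m, r ^ n] 0 + c1 • Matrix.diagonal ![r ^ m, r ^ n] 1 := by
      funext j
      fin_cases j <;>
        simp [Matrix.diagonal, ← h0, ← h1]
    rw [hw]
    exact add_mem (Submodule.smul_mem _ _ (Submodule.subset_span ⟨0, rfl⟩))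
      (Submodule.smul_mem _ _ (Submodule.subset_span ⟨1, rfl⟩))
  -- r^n annihilates the first quotient
  have hzero1 : ∀ u : ((Fin 2 → R) ⧸ N1), (r ^ n) • u = 0 := by
    intro u
    obtain ⟨v, rfl⟩ := Submodule.Quotient.mk_surjective _ u
    rw [← Submodule.Quotient.mk_smul, Submodule.Quotient.mk_eq_zero]
    apply rowmem
    · obtain ⟨y, hy⟩ := hcommpow n (v 0)
      refine ⟨y * r ^ (n - m), ?_⟩
      show y * r ^ (n - m) * r ^ m = r ^ n * v 0
      rw [mul_assoc, ← pow_add, Nat.sub_add_cancel hmn, ← hy]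
    · obtain ⟨y, hy⟩ := hcommpow n (v 1)
      exact ⟨y, by rw [← hy]; rfl⟩
  -- hence r^n annihilates the second quotient
  have hzero2 : ∀ u : ((Fin 2 → R) ⧸ N2), (r ^ n) • u = 0 := by
    intro u
    have : u = e (e.symm u) := (e.apply_symm_apply u).symm
    rw [this, ← map_smul, hzero1, map_zero]
  -- apply to the class of (1,1)
  have hmem : (r ^ n) • (fun _ => (1 : R) : Fin 2 → R) ∈ N2 := by
    rw [← Submodule.Quotient.mk_eq_zero, Submodule.Quotient.mk_smul]
    exact hzero2 _
  rw [hN2, Submodule.mem_span_range_iff_exists_fun] at hmem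
  obtain ⟨c, hc⟩ := hmem
  have hc1 := congrFun hc 1
  simp [Fin.sum_univ_two, Matrix.diagonal] at hc1
  exact hcancel (c 1) hc1
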